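/- For odd m ≥ 3, the maximal Chermak-Delgado measure of the dihedral group D_{2m} of order 2m is m², and the Chermak-Delgado lattice of D_{2m} consists only of the cyclic rotation subgroup ⟨a⟩ of order m. -/

import Mathlib

/-- The Chermak–Delgado measure of a subgroup: `|H| * |C_G(H)|`. -/
noncomputable def chermakDelgadoMeasure {G : Type*} [Group G] (H : Subgroup G) : ℕ :=
  Nat.card H * Nat.card (Subgroup.centralizer (H : Set G))

open DihedralGroup Subgroup

section aux
variable {m : ℕ}

lemma two_inj (hodd : Odd m) {i : ZMod m} (h : i + i = 0) : i = 0 := by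
  have hu : IsUnit (2 : ZMod m) := by
    have := (ZMod.isUnit_iff_coprime 2 m).2 (Nat.coprime_two_left.2 hodd)
    simpa using this
  have h2 : (2 : ZMod m) * i = 0 := by rw [two_mul]; exact h
  exact (hu.mul_right_eq_zero).1 h2

lemma r_one_zpow (k : ℤ) : (r 1 : DihedralGroup m) ^ k = r (k : ZMod m) := by
  cases k with
  | ofNat n => rw [Int.ofNat_eq_coe, zpow_natCast, r_one_pow]; norm_cast
  | negSucc n =>
      rw [zpow_negSucc, r_one_pow]
      have : (r ((n+1 : ℕ) : ZMod m) : DihedralGroup m)⁻¹ = r (-((n+1 : ℕ) : ZMod m)) := by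
        apply inv_eq_of_mul_eq_one_right
        rw [r_mul_r, add_neg_cancel, one_def]
      push_cast at this ⊢
      rw [this]

lemma mem_zpowers_r (hm : 0 < m) (i : ZMod m) : r i ∈ zpowers (r 1 : DihedralGroup m) := by
  haveI : NeZero m := ⟨hm.ne'⟩
  refine mem_zpowers_iff.mpr ⟨(i.val : ℤ), ?_⟩
  rw [_root_.r_one_zpow]
  push_cast [ZMod.natCast_val, ZMod.cast_id]
  rfl

lemma mem_zpowers_r_iff (hm : 0 < m) (x : DihedralGroup m) :
    x ∈ zpowers (r 1 : DihedralGroup m) ↔ ∃ i, x = r i := by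
  constructor
  · rintro ⟨k, rfl⟩; exact ⟨(k : ZMod m), (_root_.r_one_zpow k)⟩
  · rintro ⟨i, rfl⟩; exact mem_zpowers_r hm i

end aux

lemma cent_eq {m : ℕ} (hm0 : 0 < m) (hodd : Odd m) {K : Subgroup (DihedralGroup m)}
    (hKR : K ≤ zpowers (r 1 : DihedralGroup m)) {i : ZMod m} (hi : i ≠ 0) (hxK : r i ∈ K) :
    centralizer (K : Set (DihedralGroup m)) = zpowers (r 1 : DihedralGroup m) := by
  apply le_antisymm
  · intro x hx
    rw [mem_zpowers_r_iff hm0]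
    cases x with
    | r j => exact ⟨j, rfl⟩
    | sr j =>
      exfalso
      have hcomm := (mem_centralizer_iff.mp hx) (r i) hxK
      rw [r_mul_sr, sr_mul_r] at hcomm
      have : j - i = j + i := by injection hcomm
      have : i + i = 0 := by linear_combination -this
      exact hi (two_inj hodd this)
  · intro x hx
    obtain ⟨j, rfl⟩ := (mem_zpowers_r_iff hm0 x).mp hx
    rw [mem_centralizer_iff]
    intro h hh
    obtain ⟨k, rfl⟩ := (mem_zpowers_r_iff hm0 h).mp (hKR hh)
    rw [r_mul_r, r_mul_r, add_comm]

lemma cd_R (m : ℕ) (hm : 3 ≤ m) (hodd : Odd m) :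
    chermakDelgadoMeasure (zpowers (r 1 : DihedralGroup m)) = m ^ 2 := by
  haveI : NeZero m := ⟨by omega⟩
  haveI : Fact (1 < m) := ⟨by omega⟩
  have h1 : (1 : ZMod m) ≠ 0 := one_ne_zero
  rw [chermakDelgadoMeasure,
    cent_eq (by omega : 0 < m) hodd le_rfl h1 (mem_zpowers (r 1 : DihedralGroup m)),
    Nat.card_zpowers, orderOf_r_one, sq]

lemma cd_key (m : ℕ) (hm : 3 ≤ m) (hodd : Odd m) (K : Subgroup (DihedralGroup m)) :
    chermakDelgadoMeasure K ≤ m ^ 2 ∧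
      (chermakDelgadoMeasure K = m ^ 2 → K = zpowers (DihedralGroup.r 1)) := by
  haveI : NeZero m := ⟨by omega⟩
  have hm0 : 0 < m := by omega
  have hsq : m ^ 2 = m * m := sq m
  have h2m : 2 * m < m * m := lt_of_lt_of_le (by omega) (Nat.mul_le_mul_right m hm)
  have h9 : 9 ≤ m * m := Nat.mul_le_mul hm hm
  have hcardR : Nat.card (zpowers (r 1 : DihedralGroup m)) = m := by
    rw [Nat.card_zpowers, orderOf_r_one]
  by_cases hKR : K ≤ zpowers (r 1 : DihedralGroup m)
  · by_cases hbot : K = ⊥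
    · subst hbot
      have hc : centralizer ((⊥ : Subgroup (DihedralGroup m)) : Set (DihedralGroup m)) = ⊤ := by
        ext x; simp [mem_centralizer_iff]
      have : chermakDelgadoMeasure (⊥ : Subgroup (DihedralGroup m)) = 2 * m := by
        rw [chermakDelgadoMeasure, hc, Subgroup.card_bot, Subgroup.card_top, nat_card, one_mul]
      rw [this, hsq]
      exact ⟨h2m.le, fun h => absurd h h2m.ne⟩
    · obtain ⟨⟨x, hxK⟩, hx1⟩ := Subgroup.ne_bot_iff_exists_ne_one.mp hbot
      have hx1' : x ≠ 1 := by simpa [Subtype.ext_iff] using hx1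
      obtain ⟨i, rfl⟩ := (mem_zpowers_r_iff hm0 x).mp (hKR hxK)
      have hi : i ≠ 0 := fun h => hx1' (by rw [h, one_def])
      have hcent := cent_eq hm0 hodd hKR hi hxK
      have hKle : Nat.card K ≤ m :=
        le_trans (Subgroup.card_le_of_le hKR) (le_of_eq hcardR)
      rw [chermakDelgadoMeasure, hcent, hcardR, hsq]
      refine ⟨Nat.mul_le_mul_right m hKle, fun h => ?_⟩
      have hKm : Nat.card K = m := Nat.eq_of_mul_eq_mul_right hm0 h
      exact Subgroup.eq_of_le_of_card_ge hKR (le_of_eq (hcardR.trans hKm.symm))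
  · -- K contains a reflection
    have hex : ∃ j, sr j ∈ K := by
      by_contra hcon
      push_neg at hcon
      exact hKR fun x hx => by
        cases x with
        | r j => exact mem_zpowers_r hm0 j
        | sr j => exact absurd hx (hcon j)
    obtain ⟨j, hjK⟩ := hex
    -- centralizer of {sr j} is {1, sr j}
    have hCsr : (centralizer ({sr j} : Set (DihedralGroup m)) : Set (DihedralGroup m))
        ⊆ {1, sr j} := by
      intro x hx
      have hcomm := (mem_centralizer_iff.mp hx) (sr j) rfl
      cases x with
      | r k =>
        rw [sr_mul_r, r_mul_sr] at hcomm
        have : j + k = j - k := by injection hcomm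
        have hk : k + k = 0 := by linear_combination this
        left
        rw [two_inj hodd hk, one_def]
      | sr k =>
        rw [sr_mul_sr, sr_mul_sr] at hcomm
        have : k - j = j - k := by injection hcomm
        have : (k - j) + (k - j) = 0 := by linear_combination this
        right
        have := two_inj hodd this
        rw [sub_eq_zero] at this
        rw [this]
        rfl
    have hCK : (centralizer (K : Set (DihedralGroup m)) : Set (DihedralGroup m))
        ⊆ {1, sr j} :=
      fun x hx => hCsr (centralizer_le (by simpa using hjK) hx)
    have hpair : Nat.card ({1, sr j} : Set (DihedralGroup m)) = 2 := by
      rw [Nat.card_coe_set_eq, Set.ncard_pair]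
      intro h
      rw [one_def] at h
      cases h
    have hCle2 : Nat.card (centralizer (K : Set (DihedralGroup m))) ≤ 2 := by
      have h := Set.ncard_le_ncard hCK (Set.toFinite _)
      rw [← Nat.card_coe_set_eq, ← Nat.card_coe_set_eq, hpair] at h
      simpa using h
    by_cases hsj : sr j ∈ centralizer (K : Set (DihedralGroup m))
    · -- K itself is inside {1, sr j}
      have hKsub : (K : Set (DihedralGroup m)) ⊆ {1, sr j} := by
        intro x hx
        apply hCsr
        rw [SetLike.mem_coe, mem_centralizer_iff]
        rintro h rfl
        exact ((mem_centralizer_iff.mp hsj) x hx).symm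
      have hKle2 : Nat.card K ≤ 2 := by
        have h := Set.ncard_le_ncard hKsub (Set.toFinite _)
        rw [← Nat.card_coe_set_eq, ← Nat.card_coe_set_eq, hpair] at h
        simpa using h
      have hb : chermakDelgadoMeasure K ≤ 4 := by
        rw [chermakDelgadoMeasure]
        calc Nat.card K * Nat.card (centralizer (K : Set (DihedralGroup m)))
            ≤ 2 * 2 := Nat.mul_le_mul hKle2 hCle2
          _ = 4 := rfl
      have h4 : 4 < m ^ 2 := by
        rw [hsq]; exact lt_of_lt_of_le (by norm_num) h9
      exact ⟨hb.trans h4.le, fun h => absurd (h ▸ hb) (Nat.not_le.mpr h4)⟩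
    · -- centralizer is trivial
      have hCbot : centralizer (K : Set (DihedralGroup m)) = ⊥ := by
        rw [Subgroup.eq_bot_iff_forall]
        intro x hx
        rcases hCK hx with h | h
        · exact h
        · exact absurd (h ▸ hx) hsj
      have hKle : Nat.card K ≤ 2 * m := by
        rw [← nat_card]
        exact Subgroup.card_le_card_group K
      rw [chermakDelgadoMeasure, hCbot, Subgroup.card_bot, mul_one]
      have hlt : Nat.card K < m ^ 2 := by
        rw [hsq]; exact lt_of_le_of_lt hKle h2m
      exact ⟨hlt.le, fun h => absurd h hlt.ne⟩

/-- For odd `m ≥ 3`, `m(D_{2m}) = m²` and `CD(D_{2m}) = {⟨a⟩}`, the rotation subgroup. -/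
theorem stmt_12 (m : ℕ) (hm : 3 ≤ m) (hodd : Odd m) :
    IsGreatest {k | ∃ H : Subgroup (DihedralGroup m), chermakDelgadoMeasure H = k} (m ^ 2) ∧
    {H : Subgroup (DihedralGroup m) |
        ∀ K : Subgroup (DihedralGroup m), chermakDelgadoMeasure K ≤ chermakDelgadoMeasure H} =
      {Subgroup.zpowers (DihedralGroup.r 1)} := by
  refine ⟨⟨⟨_, cd_R m hm hodd⟩, ?_⟩, ?_⟩
  · rintro k ⟨H, rfl⟩
    exact (cd_key m hm hodd H).1
  · ext H
    simp only [Set.mem_setOf_eq, Set.mem_singleton_iff]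
    constructor
    · intro h
      have h1 := h (zpowers (r 1))
      rw [cd_R m hm hodd] at h1
      exact (cd_key m hm hodd H).2 (le_antisymm (cd_key m hm hodd H).1 h1)
    · rintro rfl K
      rw [cd_R m hm hodd]
      exact (cd_key m hm hodd K).1
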